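/- Let n and m be natural numbers such that n + 4 ≤ 3m, n ≥ 11, and n ≥ m. Then, as real numbers, |(F_{n+2} − 1)/F_m − L_{n−m+2}| < 1. -/

import Mathlib

/-- The Lucas numbers: L 0 = 2, L 1 = 1, L (n+2) = L (n+1) + L n. -/
def lucas : ℕ → ℕ
  | 0 => 2
  | 1 => 1
  | n + 2 => lucas n + lucas (n + 1)

lemma lucas_eq_fib : ∀ a, lucas (a + 1) = Nat.fib a + Nat.fib (a + 2)
  | 0 => by decide
  | 1 => by decide
  | (a + 2) => by
    show lucas (a + 1) + lucas (a + 2) = _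
    rw [lucas_eq_fib a, lucas_eq_fib (a + 1)]
    have h1 : Nat.fib (a + 2) = Nat.fib a + Nat.fib (a + 1) := Nat.fib_add_two
    have h2 : Nat.fib (a + 2 + 2) = Nat.fib (a + 2) + Nat.fib (a + 2 + 1) := Nat.fib_add_two
    have h3 : Nat.fib (a + 1 + 2) = Nat.fib (a + 2 + 1) := by norm_num
    omega

lemma identA : ∀ b a, b ≤ a →
    (Nat.fib (a + b) : ℤ) + (-1) ^ b * Nat.fib (a - b) = lucas b * Nat.fib a
  | 0, a, _ => by simp [lucas]; ring
  | 1, a, h => by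
    obtain ⟨c, rfl⟩ : ∃ c, a = c + 1 := ⟨a - 1, by omega⟩
    have h1 : Nat.fib (c + 1 + 1) = Nat.fib c + Nat.fib (c + 1) := Nat.fib_add_two
    rw [h1, show c + 1 - 1 = c from rfl, show lucas 1 = 1 from rfl]
    push_cast
    ring
  | (b + 2), a, h => by
    obtain ⟨c, rfl⟩ : ∃ c, a = c + b + 2 := ⟨a - b - 2, by omega⟩
    have H1 := identA b (c + b + 2) (by omega)
    have H2 := identA (b + 1) (c + b + 2) (by omega)
    have e1 : c + b + 2 - b = c + 2 := by omega
    have e2 : c + b + 2 - (b + 1) = c + 1 := by omega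
    have e3 : c + b + 2 - (b + 2) = c := by omega
    rw [e1] at H1; rw [e2] at H2; rw [e3]
    have f1 : Nat.fib (c + 2) = Nat.fib c + Nat.fib (c + 1) := Nat.fib_add_two
    have f2 : Nat.fib (c + b + 2 + (b + 2)) =
        Nat.fib (c + b + 2 + b) + Nat.fib (c + b + 2 + (b + 1)) := by
      have h := Nat.fib_add_two (n := c + b + 2 + b)
      have e : c + b + 2 + b + 2 = c + b + 2 + (b + 2) := by omega
      have e' : c + b + 2 + b + 1 = c + b + 2 + (b + 1) := by omega
      rw [e, e'] at h; exact h
    have fl : lucas (b + 2) = lucas b + lucas (b + 1) := rfl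
    rw [fl, f2]
    push_cast [f1] at *
    ring_nf
    ring_nf at H1 H2
    linear_combination H1 + H2

lemma identB : ∀ b a, b ≤ a →
    (Nat.fib (a + b) : ℤ) - (-1) ^ b * Nat.fib (a - b) = lucas a * Nat.fib b
  | 0, a, _ => by simp
  | 1, a, h => by
    obtain ⟨c, rfl⟩ : ∃ c, a = c + 1 := ⟨a - 1, by omega⟩
    rw [lucas_eq_fib c, show c + 1 + 1 = c + 2 from rfl, show c + 1 - 1 = c from rfl,
      show Nat.fib 1 = 1 from rfl]
    push_cast
    ring
  | (b + 2), a, h => by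
    obtain ⟨c, rfl⟩ : ∃ c, a = c + b + 2 := ⟨a - b - 2, by omega⟩
    have H1 := identB b (c + b + 2) (by omega)
    have H2 := identB (b + 1) (c + b + 2) (by omega)
    have e1 : c + b + 2 - b = c + 2 := by omega
    have e2 : c + b + 2 - (b + 1) = c + 1 := by omega
    have e3 : c + b + 2 - (b + 2) = c := by omega
    rw [e1] at H1; rw [e2] at H2; rw [e3]
    have f1 : Nat.fib (c + 2) = Nat.fib c + Nat.fib (c + 1) := Nat.fib_add_two
    have f2 : Nat.fib (c + b + 2 + (b + 2)) =
        Nat.fib (c + b + 2 + b) + Nat.fib (c + b + 2 + (b + 1)) := by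
      have h := Nat.fib_add_two (n := c + b + 2 + b)
      have e : c + b + 2 + b + 2 = c + b + 2 + (b + 2) := by omega
      have e' : c + b + 2 + b + 1 = c + b + 2 + (b + 1) := by omega
      rw [e, e'] at h; exact h
    have f3 : Nat.fib (b + 2) = Nat.fib b + Nat.fib (b + 1) := Nat.fib_add_two
    rw [f2]
    push_cast [f1, f3] at *
    ring_nf
    ring_nf at H1 H2
    linear_combination H1 + H2

lemma fib_gap (m : ℕ) (hm : 5 ≤ m) : Nat.fib (m - 2) + 1 < Nat.fib m := by
  obtain ⟨q, rfl⟩ : ∃ q, m = q + 5 := ⟨m - 5, by omega⟩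
  have e : q + 5 - 2 = q + 3 := by omega
  rw [e]
  have h1 : Nat.fib (q + 5) = Nat.fib (q + 3) + Nat.fib (q + 4) := by
    have h := Nat.fib_add_two (n := q + 3)
    have e1 : q + 3 + 2 = q + 5 := by omega
    have e2 : q + 3 + 1 = q + 4 := by omega
    rw [e1, e2] at h; exact h
  have h2 : 3 ≤ Nat.fib (q + 4) := by
    have := Nat.fib_mono (show 4 ≤ q + 4 by omega)
    simpa [show Nat.fib 4 = 3 by decide] using this
  omega

/-- If n + 4 ≤ 3m, n ≥ 11 and n ≥ m, then (F_{n+2} - 1)/F_m is within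
distance 1 of the Lucas number L_{n-m+2}. -/
theorem fib_ratio_close_to_lucas (n m : ℕ)
    (h1 : n + 4 ≤ 3 * m) (h2 : 11 ≤ n) (h3 : m ≤ n) :
    |((Nat.fib (n + 2) : ℝ) - 1) / (Nat.fib m : ℝ) - (lucas (n - m + 2) : ℝ)| < 1 := by
  have hm5 : 5 ≤ m := by omega
  set k := n - m + 2 with hk
  have hmk : m + k = n + 2 := by omega
  have hfmpos : 0 < Nat.fib m := Nat.fib_pos.2 (by omega)
  have hfmR : (0 : ℝ) < (Nat.fib m : ℝ) := by exact_mod_cast hfmpos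
  have key : |(Nat.fib (n + 2) : ℤ) - 1 - lucas k * Nat.fib m| < Nat.fib m := by
    by_cases hc : k ≤ m
    · have hA := identA k m hc
      rw [hmk] at hA
      have hsub : m - k ≤ m - 2 := by omega
      have hfb : Nat.fib (m - k) + 1 < Nat.fib m :=
        lt_of_le_of_lt (by have := Nat.fib_mono hsub; omega) (fib_gap m hm5)
      have hfbZ : (Nat.fib (m - k) : ℤ) + 1 < Nat.fib m := by exact_mod_cast hfb
      have hnn : (0 : ℤ) ≤ Nat.fib (m - k) := by positivity
      rcases Nat.even_or_odd k with hpar | hpar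
      · rw [hpar.neg_one_pow] at hA
        rw [abs_lt]; constructor <;> linarith
      · rw [hpar.neg_one_pow] at hA
        rw [abs_lt]; constructor <;> linarith
    · have hB := identB m k (by omega)
      rw [show k + m = n + 2 by omega] at hB
      have hsub : k - m ≤ m - 2 := by omega
      have hfb : Nat.fib (k - m) + 1 < Nat.fib m :=
        lt_of_le_of_lt (by have := Nat.fib_mono hsub; omega) (fib_gap m hm5)
      have hfbZ : (Nat.fib (k - m) : ℤ) + 1 < Nat.fib m := by exact_mod_cast hfb
      have hnn : (0 : ℤ) ≤ Nat.fib (k - m) := by positivity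
      rcases Nat.even_or_odd m with hpar | hpar
      · rw [hpar.neg_one_pow] at hB
        rw [abs_lt]; constructor <;> linarith
      · rw [hpar.neg_one_pow] at hB
        rw [abs_lt]; constructor <;> linarith
  have keyR : |((Nat.fib (n + 2) : ℝ) - 1 - lucas k * Nat.fib m)| < Nat.fib m := by
    exact_mod_cast key
  rw [div_sub' (ne_of_gt hfmR), abs_div, abs_of_pos hfmR, div_lt_one hfmR]
  rw [mul_comm ((Nat.fib m : ℝ)) ((lucas k : ℕ) : ℝ)]
  exact keyR
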